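/- Let m > 4 be an integer, let u : ℝ^m ∖ {0} → ℝ^{m²} be the Misawa–Nakauchi map, let α ∈ (0, π/2) satisfy sin²α = 1 − 2/m, and define ũ(x) = (sin α · u(x), cos α) with values in 𝕊^{m²} ⊂ ℝ^{m²+1}. Then the energy density of ũ satisfies |∇ũ(x)|²/2 = (m−2)/r(x)² for every x ∈ ℝ^m ∖ {0}. -/

import Mathlib

noncomputable section

open Real

/-- Partial derivative of `f` in the `k`-th coordinate direction. -/
def pd {m : ℕ} (k : Fin m) (f : EuclideanSpace ℝ (Fin m) → ℝ)
    (x : EuclideanSpace ℝ (Fin m)) : ℝ :=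
  fderiv ℝ f x (EuclideanSpace.single k 1)

/-- Euclidean Laplacian `Δf = Σ_k ∂²f/∂x_k²`. -/
def lap {m : ℕ} (f : EuclideanSpace ℝ (Fin m) → ℝ)
    (x : EuclideanSpace ℝ (Fin m)) : ℝ :=
  ∑ k : Fin m, pd k (pd k f) x

/-- Squared norm of the total derivative of a map `w` with components `w a`:
`|∇w|² = Σ_{k,a} (∂_k w_a)²`. -/
def gradSq {m : ℕ} {ι : Type*} [Fintype ι]
    (w : ι → EuclideanSpace ℝ (Fin m) → ℝ) (x : EuclideanSpace ℝ (Fin m)) : ℝ :=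
  ∑ k : Fin m, ∑ a : ι, (pd k (w a) x) ^ 2

/-- `w` satisfies the (extrinsic) biharmonic map equation for sphere-valued maps at `x`:
`Δ²w + 2 div(|∇w|²∇w) + (|Δw|² + Δ|∇w|² + 2⟨∇w,∇Δw⟩ + 2|∇w|⁴) w = 0`. -/
def IsBiharmonicAt {m : ℕ} {ι : Type*} [Fintype ι]
    (w : ι → EuclideanSpace ℝ (Fin m) → ℝ) (x : EuclideanSpace ℝ (Fin m)) : Prop :=
  ∀ a : ι,
    lap (lap (w a)) x
      + 2 * ∑ k : Fin m, pd k (fun y => gradSq w y * pd k (w a) y) x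
      + ((∑ b : ι, (lap (w b) x) ^ 2) + lap (gradSq w) x
          + 2 * ∑ k : Fin m, ∑ b : ι, pd k (w b) x * pd k (lap (w b)) x
          + 2 * (gradSq w x) ^ 2) * w a x = 0

/-- The Misawa–Nakauchi map `u_{ij}(x) = (1/√(m(m−1)))(−δ_{ij} + m xᵢxⱼ/r²)`. -/
def uMN (m : ℕ) (i j : Fin m) (x : EuclideanSpace ℝ (Fin m)) : ℝ :=
  (1 / Real.sqrt ((m : ℝ) * ((m : ℝ) - 1))) *
    (-(if i = j then (1 : ℝ) else 0) + (m : ℝ) * x i * x j / ‖x‖ ^ 2)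

/-- The rotated map `ũ_α = (sin α · u, cos α)`, with values in `ℝ^{m²+1} = ℝ^{m²} × ℝ`. -/
def uTilde (m : ℕ) (α : ℝ) :
    (Fin m × Fin m) ⊕ Unit → EuclideanSpace ℝ (Fin m) → ℝ
  | Sum.inl p => fun x => Real.sin α * uMN m p.1 p.2 x
  | Sum.inr _ => fun _ => Real.cos α

/-! ### Auxiliary lemmas -/

lemma hcoordMN {m : ℕ} (i : Fin m) (x : EuclideanSpace ℝ (Fin m)) :
    HasFDerivAt (fun y : EuclideanSpace ℝ (Fin m) => y i) (EuclideanSpace.proj (𝕜 := ℝ) i) x :=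
  (EuclideanSpace.proj (𝕜 := ℝ) i).hasFDerivAt

lemma uMN_eq (m : ℕ) (i j : Fin m) : uMN m i j = fun y =>
    (1 / Real.sqrt ((m : ℝ) * ((m : ℝ) - 1))) *
    (-(if i = j then (1 : ℝ) else 0) + ((m : ℝ) * y i * y j) * (‖y‖ ^ 2)⁻¹) := by
  funext y; simp only [uMN, div_eq_mul_inv]

lemma hasFDerivAt_uMN {m : ℕ} (i j : Fin m) (x : EuclideanSpace ℝ (Fin m)) (hx : x ≠ 0) :
    HasFDerivAt (uMN m i j)
      ((1 / Real.sqrt ((m : ℝ) * ((m : ℝ) - 1))) •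
        ((((m : ℝ) * x i * x j) • ((ContinuousLinearMap.smulRight (1 : ℝ →L[ℝ] ℝ)
             (-((‖x‖^2) ^ 2)⁻¹)).comp (2 • (innerSL ℝ x)))
          + (‖x‖^2)⁻¹ • (((m : ℝ) * x i) • EuclideanSpace.proj (𝕜 := ℝ) j
              + x j • ((m:ℝ) • EuclideanSpace.proj (𝕜 := ℝ) i))))) x := by
  have hQ : ‖x‖^2 ≠ 0 := pow_ne_zero _ (norm_ne_zero_iff.mpr hx)
  have hden : HasFDerivAt (fun y : EuclideanSpace ℝ (Fin m) => ‖y‖^2) (2 • (innerSL ℝ x)) x :=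
    (hasStrictFDerivAt_norm_sq x).hasFDerivAt
  have hinv := (hasFDerivAt_inv hQ).comp x hden
  have hnum := ((hcoordMN i x).const_mul (m:ℝ)).mul (hcoordMN j x)
  have h := ((hnum.mul hinv).const_add
      (-(if i = j then (1:ℝ) else 0))).const_mul (1 / Real.sqrt ((m : ℝ) * ((m : ℝ) - 1)))
  rw [uMN_eq]
  exact h

lemma pd_uMN {m : ℕ} (i j k : Fin m) (x : EuclideanSpace ℝ (Fin m)) (hx : x ≠ 0) :
    pd k (uMN m i j) x =
      (1 / Real.sqrt ((m : ℝ) * ((m : ℝ) - 1))) * (m : ℝ) / ‖x‖^2 *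
        ((if i = k then (1:ℝ) else 0) * x j + (if j = k then (1:ℝ) else 0) * x i
          - 2 * x i * x j * x k / ‖x‖^2) := by
  have hQ : ‖x‖^2 ≠ 0 := pow_ne_zero _ (norm_ne_zero_iff.mpr hx)
  rw [pd, (hasFDerivAt_uMN i j x hx).fderiv]
  simp only [ContinuousLinearMap.smul_apply, ContinuousLinearMap.add_apply,
    ContinuousLinearMap.comp_apply, ContinuousLinearMap.smulRight_apply,
    ContinuousLinearMap.one_apply, PiLp.proj_apply,
    EuclideanSpace.single_apply, smul_eq_mul, EuclideanSpace.inner_single_right,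
    innerSL_apply_apply, RCLike.inner_apply, starRingEnd_apply, star_trivial]
  simp only [nsmul_eq_mul, Nat.cast_ofNat, one_mul]
  have h0 : ‖x‖ ≠ 0 := norm_ne_zero_iff.mpr hx
  generalize (if i = k then (1:ℝ) else 0) = A
  generalize (if j = k then (1:ℝ) else 0) = B
  ring

lemma sum_sq_aux {m : ℕ} (v : Fin m → ℝ) (Q : ℝ) (hQ : Q ≠ 0) (hsum : ∑ i, v i ^ 2 = Q) :
    ∑ k : Fin m, ∑ i : Fin m, ∑ j : Fin m,
      ((if i = k then (1:ℝ) else 0) * v j + (if j = k then (1:ℝ) else 0) * v i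
        - 2 * v i * v j * v k / Q)^2 = (2 * m - 2) * Q := by
  have hj : ∀ k i : Fin m,
      ∑ j : Fin m, ((if i = k then (1:ℝ) else 0) * v j + (if j = k then (1:ℝ) else 0) * v i
        - 2 * v i * v j * v k / Q)^2
      = (if i = k then (1:ℝ) else 0) * (Q - 2 * v i * v k) + v i ^ 2 := by
    intro k i
    have h1 : ∀ j : Fin m,
        ((if i = k then (1:ℝ) else 0) * v j + (if j = k then (1:ℝ) else 0) * v i
          - 2 * v i * v j * v k / Q)^2
        = ((if i = k then (1:ℝ) else 0) - 2 * v i * v k / Q)^2 * (v j)^2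
          + (2 * ((if i = k then (1:ℝ) else 0) - 2 * v i * v k / Q) * v i)
              * ((if j = k then (1:ℝ) else 0) * v j)
          + v i ^ 2 * (if j = k then (1:ℝ) else 0) := by
      intro j
      by_cases h : j = k <;> simp only [h, if_true, if_false] <;> ring
    rw [Finset.sum_congr rfl fun j _ => h1 j]
    rw [Finset.sum_add_distrib, Finset.sum_add_distrib,
      ← Finset.mul_sum, ← Finset.mul_sum, ← Finset.mul_sum, hsum]
    simp only [ite_mul, one_mul, zero_mul, Finset.sum_ite_eq', Finset.mem_univ, if_true,
      Finset.sum_boole]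
    by_cases h : i = k <;> simp only [h, if_true, if_false] <;> field_simp <;> ring
  rw [Finset.sum_congr rfl fun k _ => Finset.sum_congr rfl fun i _ => hj k i]
  have hi : ∀ k : Fin m,
      ∑ i : Fin m, ((if i = k then (1:ℝ) else 0) * (Q - 2 * v i * v k) + v i ^ 2)
      = 2 * Q - 2 * v k ^ 2 := by
    intro k
    rw [Finset.sum_add_distrib, hsum]
    simp only [ite_mul, one_mul, zero_mul, Finset.sum_ite_eq', Finset.mem_univ, if_true]
    ring
  rw [Finset.sum_congr rfl fun k _ => hi k]
  rw [Finset.sum_sub_distrib, Finset.sum_const, ← Finset.mul_sum, hsum]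
  simp only [Finset.card_univ, Fintype.card_fin, nsmul_eq_mul]
  ring

lemma norm_sq_eq_sum {m : ℕ} (x : EuclideanSpace ℝ (Fin m)) :
    ∑ i, x i ^ 2 = ‖x‖ ^ 2 := by
  rw [EuclideanSpace.norm_eq, Real.sq_sqrt (by positivity)]
  simp [Real.norm_eq_abs, sq_abs]

theorem stmt5 (m : ℕ) (hm : 4 < m) (α : ℝ) (hα : α ∈ Set.Ioo 0 (π / 2))
    (hsin : Real.sin α ^ 2 = 1 - 2 / (m : ℝ))
    (x : EuclideanSpace ℝ (Fin m)) (hx : x ≠ 0) :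
    gradSq (uTilde m α) x / 2 = ((m : ℝ) - 2) / ‖x‖ ^ 2 := by
  have hm4 : (4:ℝ) < (m:ℝ) := by exact_mod_cast hm
  have hm0 : (m:ℝ) ≠ 0 := by linarith
  have hm1 : (m:ℝ) - 1 ≠ 0 := by linarith
  have hQ : ‖x‖^2 ≠ 0 := pow_ne_zero _ (norm_ne_zero_iff.mpr hx)
  have hpd : ∀ (k : Fin m) (p : Fin m × Fin m),
      pd k (uTilde m α (Sum.inl p)) x = Real.sin α * pd k (uMN m p.1 p.2) x := by
    intro k p
    show fderiv ℝ (fun y => Real.sin α * uMN m p.1 p.2 y) x (EuclideanSpace.single k 1) = _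
    rw [fderiv_const_mul (hasFDerivAt_uMN p.1 p.2 x hx).differentiableAt]
    simp [pd]
  have hpd0 : ∀ k : Fin m, pd k (uTilde m α (Sum.inr ())) x = 0 := by
    intro k
    show fderiv ℝ (fun _ => Real.cos α) x (EuclideanSpace.single k 1) = 0
    rw [fderiv_fun_const]
    simp
  have hc2 : (1 / Real.sqrt ((m:ℝ) * ((m:ℝ) - 1)))^2 = 1 / ((m:ℝ) * ((m:ℝ) - 1)) := by
    rw [div_pow, one_pow, Real.sq_sqrt (by nlinarith)]
  have key : gradSq (uTilde m α) x
      = Real.sin α ^ 2 * ∑ k : Fin m, ∑ i : Fin m, ∑ j : Fin m, (pd k (uMN m i j) x)^2 := by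
    rw [gradSq, Finset.mul_sum]
    refine Finset.sum_congr rfl fun k _ => ?_
    rw [Fintype.sum_sum_type]
    have : ∑ b : Unit, (pd k (uTilde m α (Sum.inr b)) x)^2 = 0 := by
      simp [hpd0]
    rw [this, add_zero, Fintype.sum_prod_type, Finset.mul_sum]
    refine Finset.sum_congr rfl fun i _ => ?_
    rw [Finset.mul_sum]
    refine Finset.sum_congr rfl fun j _ => ?_
    rw [hpd k (i, j)]
    ring
  have key2 : ∑ k : Fin m, ∑ i : Fin m, ∑ j : Fin m, (pd k (uMN m i j) x)^2
      = 2 * (m:ℝ) / ‖x‖^2 := by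
    have e1 : ∀ (k i j : Fin m), (pd k (uMN m i j) x)^2
        = ((1 / Real.sqrt ((m:ℝ) * ((m:ℝ) - 1))) * (m:ℝ) / ‖x‖^2)^2 *
          ((if i = k then (1:ℝ) else 0) * x j + (if j = k then (1:ℝ) else 0) * x i
            - 2 * x i * x j * x k / ‖x‖^2)^2 := by
      intro k i j
      rw [pd_uMN i j k x hx, mul_pow]
    calc ∑ k : Fin m, ∑ i : Fin m, ∑ j : Fin m, (pd k (uMN m i j) x)^2
        = ((1 / Real.sqrt ((m:ℝ) * ((m:ℝ) - 1))) * (m:ℝ) / ‖x‖^2)^2 *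
            ∑ k : Fin m, ∑ i : Fin m, ∑ j : Fin m,
              ((if i = k then (1:ℝ) else 0) * x j + (if j = k then (1:ℝ) else 0) * x i
                - 2 * x i * x j * x k / ‖x‖^2)^2 := by
          rw [Finset.mul_sum]
          refine Finset.sum_congr rfl fun k _ => ?_
          rw [Finset.mul_sum]
          refine Finset.sum_congr rfl fun i _ => ?_
          rw [Finset.mul_sum]
          exact Finset.sum_congr rfl fun j _ => e1 k i j
      _ = ((1 / Real.sqrt ((m:ℝ) * ((m:ℝ) - 1))) * (m:ℝ) / ‖x‖^2)^2 *
            ((2 * m - 2) * ‖x‖^2) := by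
          rw [sum_sq_aux (fun i => x i) (‖x‖^2) hQ (norm_sq_eq_sum x)]
      _ = 2 * (m:ℝ) / ‖x‖^2 := by
          rw [div_pow, mul_pow, hc2]
          field_simp
  rw [key, key2, hsin]
  field_simp
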